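/- arXiv:1401.6053 — 2 statements merged into one kernel-verified Lean document; each statement's English description precedes it below -/
import Mathlib

section
/- Weak duality for the continuous-time minimum cost flow problem in the zero-transit-time, single-arc setting: if x : [0,T] → ℝ is a feasible primal flow and (π_s, π_t, ρ) a feasible dual solution, then the primal objective value is at least the dual objective value. Concretely, let G have nodes s,t and one arc e = (s,t) with zero transit time; if 0 ≤ x(θ) ≤ u(θ) and the induced storages Y_s(θ) = B_s(θ) − ∫₀^θ x, Y_t(θ) = B_t(θ) + ∫₀^θ x satisfy 0 ≤ Y_v ≤ U_v for v ∈ {s,t}, and if π_s, π_t : [0,T] → ℝ are right-continuous of bounded variation with π_v(T) = 0, ρ(θ) ≤ 0, and π_s(θ) − π_t(θ) + ρ(θ) ≤ c(θ) for all θ, then ∫₀^T c(θ)x(θ)dθ ≥ ∫₀^T (b_s π_s + b_t π_t) dθ − Σ_{v∈{s,t}} ∫₀^T U_v dπ_v⁻ + ∫₀^T u(θ)ρ(θ) dθ. -/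
open MeasureTheory

/-- Integration by parts / Fubini step for a Stieltjes measure, for strongly
measurable integrands. -/
private lemma stieltjes_parts_meas (T : ℝ) (hT : 0 < T) (p : StieltjesFunction ℝ) (f : ℝ → ℝ)
    (hfm : StronglyMeasurable f) (hf : IntegrableOn f (Set.Ioc 0 T)) :
    ∫ θ in Set.Ioc (0:ℝ) T, (∫ t in (0:ℝ)..θ, f t) ∂p.measure
      = ∫ t in Set.Ioc (0:ℝ) T, f t * (p T - p t) := by
  have hμfin : IsFiniteMeasure (p.measure.restrict (Set.Ioc (0:ℝ) T)) := by
    constructor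
    rw [Measure.restrict_apply_univ, p.measure_Ioc]
    exact ENNReal.ofReal_lt_top
  set F : ℝ → ℝ → ℝ := fun θ t => if t < θ then f t else 0 with hFdef
  have hFm : StronglyMeasurable (Function.uncurry F) := by
    have hS : MeasurableSet {z : ℝ × ℝ | z.2 < z.1} :=
      measurableSet_lt measurable_snd measurable_fst
    exact StronglyMeasurable.ite hS (hfm.comp_measurable measurable_snd)
      stronglyMeasurable_const
  have hsnd : Integrable (fun z : ℝ × ℝ => f z.2)
      ((p.measure.restrict (Set.Ioc (0:ℝ) T)).prod (volume.restrict (Set.Ioc (0:ℝ) T))) := by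
    refine (integrable_prod_iff
      ((hfm.comp_measurable measurable_snd).aestronglyMeasurable)).2 ⟨?_, ?_⟩
    · exact Filter.Eventually.of_forall fun θ => hf
    · simpa using integrable_const (∫ t in Set.Ioc (0:ℝ) T, ‖f t‖)
  have hFint : Integrable (Function.uncurry F)
      ((p.measure.restrict (Set.Ioc (0:ℝ) T)).prod (volume.restrict (Set.Ioc (0:ℝ) T))) := by
    refine hsnd.norm.mono' hFm.aestronglyMeasurable (Filter.Eventually.of_forall fun z => ?_)
    by_cases h : z.2 < z.1 <;> simp [Function.uncurry, F, h, norm_nonneg]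
  have key : ∫ θ, (∫ t, F θ t ∂(volume.restrict (Set.Ioc (0:ℝ) T)))
        ∂(p.measure.restrict (Set.Ioc (0:ℝ) T))
      = ∫ t, (∫ θ, F θ t ∂(p.measure.restrict (Set.Ioc (0:ℝ) T)))
        ∂(volume.restrict (Set.Ioc (0:ℝ) T)) :=
    integral_integral_swap hFint
  have h1 : ∀ θ ∈ Set.Ioc (0:ℝ) T,
      (∫ t in (0:ℝ)..θ, f t) = ∫ t, F θ t ∂(volume.restrict (Set.Ioc (0:ℝ) T)) := by
    intro θ hθ
    have hind : (fun t => F θ t) = (Set.Iio θ).indicator f := by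
      funext t; simp [F, Set.indicator, Set.mem_Iio]
    rw [hind, integral_indicator measurableSet_Iio,
      Measure.restrict_restrict measurableSet_Iio]
    have hset : Set.Iio θ ∩ Set.Ioc 0 T = Set.Ioo 0 θ := by
      ext t
      simp only [Set.mem_inter_iff, Set.mem_Iio, Set.mem_Ioc, Set.mem_Ioo]
      constructor
      · rintro ⟨ha, hb, _⟩; exact ⟨hb, ha⟩
      · rintro ⟨ha, hb⟩; exact ⟨hb, ha, hb.le.trans hθ.2⟩
    rw [hset, ← integral_Ioc_eq_integral_Ioo, intervalIntegral.integral_of_le hθ.1.le]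
  have h2 : ∀ t ∈ Set.Ioc (0:ℝ) T,
      (∫ θ, F θ t ∂(p.measure.restrict (Set.Ioc (0:ℝ) T))) = f t * (p T - p t) := by
    intro t ht
    have hind : (fun θ => F θ t) = (Set.Ioi t).indicator (fun _ => f t) := by
      funext θ; simp [F, Set.indicator, Set.mem_Ioi]
    rw [hind, integral_indicator measurableSet_Ioi, setIntegral_const,
      measureReal_restrict_apply measurableSet_Ioi]
    have hset : Set.Ioi t ∩ Set.Ioc 0 T = Set.Ioc t T := by
      ext y
      simp only [Set.mem_inter_iff, Set.mem_Ioi, Set.mem_Ioc]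
      constructor
      · rintro ⟨ha, _, hb⟩; exact ⟨ha, hb⟩
      · rintro ⟨ha, hb⟩; exact ⟨ha, ht.1.trans ha, hb⟩
    rw [hset, measureReal_def, p.measure_Ioc, ENNReal.toReal_ofReal (sub_nonneg.2 (p.mono ht.2)),
      smul_eq_mul]
    ring
  calc ∫ θ in Set.Ioc (0:ℝ) T, (∫ t in (0:ℝ)..θ, f t) ∂p.measure
      = ∫ θ in Set.Ioc (0:ℝ) T,
          (∫ t, F θ t ∂(volume.restrict (Set.Ioc (0:ℝ) T))) ∂p.measure :=
        setIntegral_congr_fun measurableSet_Ioc fun θ hθ => h1 θ hθ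
    _ = ∫ t, (∫ θ, F θ t ∂(p.measure.restrict (Set.Ioc (0:ℝ) T)))
          ∂(volume.restrict (Set.Ioc (0:ℝ) T)) := key
    _ = ∫ t in Set.Ioc (0:ℝ) T, f t * (p T - p t) :=
        setIntegral_congr_fun measurableSet_Ioc fun t ht => h2 t ht

/-- Integration by parts / Fubini step for a Stieltjes measure: if `f` is integrable
on `(0, T]` then the `p`-Stieltjes integral of its primitive equals
`∫ f t * (p T - p t) dt`. -/
private lemma stieltjes_parts (T : ℝ) (hT : 0 < T) (p : StieltjesFunction ℝ) (f : ℝ → ℝ)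
    (hf : IntegrableOn f (Set.Ioc 0 T)) :
    ∫ θ in Set.Ioc (0:ℝ) T, (∫ t in (0:ℝ)..θ, f t) ∂p.measure
      = ∫ t in Set.Ioc (0:ℝ) T, f t * (p T - p t) := by
  obtain ⟨f', hf'm, hff'⟩ := hf.aestronglyMeasurable
  have hf' : IntegrableOn f' (Set.Ioc 0 T) := hf.congr hff'
  have e1 : ∀ θ ∈ Set.Ioc (0:ℝ) T,
      (∫ t in (0:ℝ)..θ, f t) = ∫ t in (0:ℝ)..θ, f' t := by
    intro θ hθ
    apply intervalIntegral.integral_congr_ae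
    have h := ae_restrict_of_ae_restrict_of_subset (Set.Ioc_subset_Ioc_right hθ.2) hff'
    rw [ae_restrict_iff' measurableSet_Ioc] at h
    filter_upwards [h] with t ht hmem
    exact ht (by rwa [Set.uIoc_of_le hθ.1.le] at hmem)
  rw [setIntegral_congr_fun measurableSet_Ioc fun θ hθ => e1 θ hθ,
    stieltjes_parts_meas T hT p f' hf'm hf']
  symm
  apply setIntegral_congr_ae measurableSet_Ioc
  have h := (ae_restrict_iff' measurableSet_Ioc).1 hff'
  filter_upwards [h] with t ht hmem
  rw [ht hmem]

/-- Weak duality for the continuous-time minimum cost flow problem in the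
zero-transit-time, single-arc setting (nodes `s`, `t`, one arc `e = (s,t)`): the
primal objective value of any feasible flow is at least the dual objective value of
any feasible dual solution. The dual functions `π_s, π_t` are right-continuous of
bounded variation, represented via decompositions `π_v = p_v - q_v` into differences
of (right-continuous, monotone) Stieltjes functions; `∫₀ᵀ U_v dπ_v⁻` is the
Lebesgue–Stieltjes integral of `U_v` against the negative part `q_v`. -/
theorem weak_duality_single_arc
    (T : ℝ) (hT : 0 < T)
    (bs bt c u Us Ut : ℝ → ℝ)
    (hu : ∀ θ ∈ Set.Icc 0 T, 0 ≤ u θ)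
    (hUs : ∀ θ ∈ Set.Icc 0 T, 0 ≤ Us θ) (hUt : ∀ θ ∈ Set.Icc 0 T, 0 ≤ Ut θ)
    -- primal feasibility
    (x : ℝ → ℝ) (hxint : IntervalIntegrable x volume 0 T)
    (hbsint : IntervalIntegrable bs volume 0 T) (hbtint : IntervalIntegrable bt volume 0 T)
    (hxu : ∀ θ ∈ Set.Icc 0 T, 0 ≤ x θ ∧ x θ ≤ u θ)
    (Ys Yt : ℝ → ℝ)
    (hYs : ∀ θ, Ys θ = (∫ t in (0:ℝ)..θ, bs t) - ∫ t in (0:ℝ)..θ, x t)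
    (hYt : ∀ θ, Yt θ = (∫ t in (0:ℝ)..θ, bt t) + ∫ t in (0:ℝ)..θ, x t)
    (hYsfeas : ∀ θ ∈ Set.Icc 0 T, 0 ≤ Ys θ ∧ Ys θ ≤ Us θ)
    (hYtfeas : ∀ θ ∈ Set.Icc 0 T, 0 ≤ Yt θ ∧ Yt θ ≤ Ut θ)
    -- dual feasibility
    (ps qs pt qt : StieltjesFunction ℝ) (πs πt : ℝ → ℝ)
    (hπs : ∀ θ, πs θ = ps θ - qs θ) (hπt : ∀ θ, πt θ = pt θ - qt θ)
    (hπsT : πs T = 0) (hπtT : πt T = 0)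
    (ρ : ℝ → ℝ) (hρ : ∀ θ ∈ Set.Icc 0 T, ρ θ ≤ 0)
    (hdualfeas : ∀ θ ∈ Set.Icc 0 T, πs θ - πt θ + ρ θ ≤ c θ)
    -- integrability of the objective integrands
    (hint1 : IntervalIntegrable (fun θ => c θ * x θ) volume 0 T)
    (hint2 : IntervalIntegrable (fun θ => bs θ * πs θ + bt θ * πt θ) volume 0 T)
    (hint3 : IntervalIntegrable (fun θ => u θ * ρ θ) volume 0 T)
    (hint4 : IntegrableOn Us (Set.Ioc 0 T) qs.measure)
    (hint5 : IntegrableOn Ut (Set.Ioc 0 T) qt.measure) :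
    (∫ θ in (0:ℝ)..T, c θ * x θ) ≥
      (∫ θ in (0:ℝ)..T, (bs θ * πs θ + bt θ * πt θ))
        - ((∫ θ in Set.Ioc (0:ℝ) T, Us θ ∂qs.measure)
            + (∫ θ in Set.Ioc (0:ℝ) T, Ut θ ∂qt.measure))
        + (∫ θ in (0:ℝ)..T, u θ * ρ θ) := by
  have hsub : Set.Ioc (0:ℝ) T ⊆ Set.Icc 0 T := Set.Ioc_subset_Icc_self
  have hx : IntegrableOn x (Set.Ioc 0 T) volume := hxint.1
  have hbs : IntegrableOn bs (Set.Ioc 0 T) volume := hbsint.1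
  have hbt : IntegrableOn bt (Set.Ioc 0 T) volume := hbtint.1
  -- boundedness of Stieltjes functions on (0, T]
  have hbdd : ∀ r : StieltjesFunction ℝ,
      ∀ᵐ θ ∂(volume.restrict (Set.Ioc (0:ℝ) T)), ‖r θ‖ ≤ ‖r 0‖ + ‖r T‖ := by
    intro r
    rw [ae_restrict_iff' measurableSet_Ioc]
    refine Filter.Eventually.of_forall fun θ hθ => ?_
    have h1 := r.mono hθ.1.le
    have h2 := r.mono hθ.2
    rw [Real.norm_eq_abs, Real.norm_eq_abs, Real.norm_eq_abs, abs_le]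
    constructor <;>
      linarith [le_abs_self (r T), neg_abs_le (r 0), abs_nonneg (r 0), abs_nonneg (r T)]
  have hmono : ∀ r : StieltjesFunction ℝ,
      AEStronglyMeasurable r (volume.restrict (Set.Ioc (0:ℝ) T)) := fun r =>
    r.mono.measurable.aestronglyMeasurable
  -- products of a bounded Stieltjes tail with an integrable function are integrable
  have hprod : ∀ (g : ℝ → ℝ) (r : StieltjesFunction ℝ), IntegrableOn g (Set.Ioc 0 T) volume →
      IntegrableOn (fun t => g t * (r T - r t)) (Set.Ioc 0 T) volume := by
    intro g r hg
    have h := hg.bdd_mul (c := ‖r T‖ + (‖r 0‖ + ‖r T‖))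
      (aestronglyMeasurable_const.sub (hmono r))
      (by filter_upwards [hbdd r] with t ht
          exact (norm_sub_le _ _).trans (add_le_add le_rfl ht))
    exact h.congr (Filter.Eventually.of_forall fun t => mul_comm _ _)
  -- π_s, π_t are a.e. strongly measurable and bounded on (0, T]
  have hπs_eq : πs = fun θ => ps θ - qs θ := funext hπs
  have hπt_eq : πt = fun θ => pt θ - qt θ := funext hπt
  have hπs_aesm : AEStronglyMeasurable πs (volume.restrict (Set.Ioc (0:ℝ) T)) := by
    rw [hπs_eq]; exact (hmono ps).sub (hmono qs)
  have hπt_aesm : AEStronglyMeasurable πt (volume.restrict (Set.Ioc (0:ℝ) T)) := by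
    rw [hπt_eq]; exact (hmono pt).sub (hmono qt)
  have hπs_bdd : ∀ᵐ t ∂(volume.restrict (Set.Ioc (0:ℝ) T)),
      ‖πs t‖ ≤ (‖ps 0‖ + ‖ps T‖) + (‖qs 0‖ + ‖qs T‖) := by
    filter_upwards [hbdd ps, hbdd qs] with t h1 h2
    rw [hπs_eq]
    exact (norm_sub_le _ _).trans (add_le_add h1 h2)
  have hπt_bdd : ∀ᵐ t ∂(volume.restrict (Set.Ioc (0:ℝ) T)),
      ‖πt t‖ ≤ (‖pt 0‖ + ‖pt T‖) + (‖qt 0‖ + ‖qt T‖) := by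
    filter_upwards [hbdd pt, hbdd qt] with t h1 h2
    rw [hπt_eq]
    exact (norm_sub_le _ _).trans (add_le_add h1 h2)
  have hmuls : ∀ g : ℝ → ℝ, IntegrableOn g (Set.Ioc 0 T) volume →
      IntegrableOn (fun t => πs t * g t) (Set.Ioc 0 T) volume := fun g hg =>
    hg.bdd_mul hπs_aesm hπs_bdd
  have hmult : ∀ g : ℝ → ℝ, IntegrableOn g (Set.Ioc 0 T) volume →
      IntegrableOn (fun t => πt t * g t) (Set.Ioc 0 T) volume := fun g hg =>
    hg.bdd_mul hπt_aesm hπt_bdd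
  -- primitives
  have hXB : ∀ θ ∈ Set.Ioc (0:ℝ) T, (∫ t in (0:ℝ)..θ, (x t - bs t)) = -(Ys θ) := by
    intro θ hθ
    have hss : Set.uIcc (0:ℝ) θ ⊆ Set.uIcc (0:ℝ) T := by
      rw [Set.uIcc_of_le hθ.1.le, Set.uIcc_of_le hT.le]
      exact Set.Icc_subset_Icc_right hθ.2
    rw [intervalIntegral.integral_sub (hxint.mono_set hss) (hbsint.mono_set hss), hYs θ]
    ring
  have hXBt : ∀ θ ∈ Set.Ioc (0:ℝ) T, (∫ t in (0:ℝ)..θ, (-(x t) - bt t)) = -(Yt θ) := by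
    intro θ hθ
    have hss : Set.uIcc (0:ℝ) θ ⊆ Set.uIcc (0:ℝ) T := by
      rw [Set.uIcc_of_le hθ.1.le, Set.uIcc_of_le hT.le]
      exact Set.Icc_subset_Icc_right hθ.2
    have h1 : (∫ t in (0:ℝ)..θ, (-(x t) - bt t))
        = (∫ t in (0:ℝ)..θ, -(x t)) - ∫ t in (0:ℝ)..θ, bt t :=
      intervalIntegral.integral_sub ((hxint.mono_set hss).neg) (hbtint.mono_set hss)
    rw [h1, intervalIntegral.integral_neg, hYt θ]
    ring
  -- integration by parts identities
  have hPs : ∫ θ in Set.Ioc (0:ℝ) T, (-(Ys θ)) ∂ps.measure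
      = ∫ t in Set.Ioc (0:ℝ) T, (x t - bs t) * (ps T - ps t) := by
    rw [← stieltjes_parts T hT ps (fun t => x t - bs t) (hx.sub hbs)]
    exact setIntegral_congr_fun measurableSet_Ioc fun θ hθ => (hXB θ hθ).symm
  have hQs : ∫ θ in Set.Ioc (0:ℝ) T, (-(Ys θ)) ∂qs.measure
      = ∫ t in Set.Ioc (0:ℝ) T, (x t - bs t) * (qs T - qs t) := by
    rw [← stieltjes_parts T hT qs (fun t => x t - bs t) (hx.sub hbs)]
    exact setIntegral_congr_fun measurableSet_Ioc fun θ hθ => (hXB θ hθ).symm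
  have hPt : ∫ θ in Set.Ioc (0:ℝ) T, (-(Yt θ)) ∂pt.measure
      = ∫ t in Set.Ioc (0:ℝ) T, (-(x t) - bt t) * (pt T - pt t) := by
    rw [← stieltjes_parts T hT pt (fun t => -(x t) - bt t) (hx.neg.sub hbt)]
    exact setIntegral_congr_fun measurableSet_Ioc fun θ hθ => (hXBt θ hθ).symm
  have hQt : ∫ θ in Set.Ioc (0:ℝ) T, (-(Yt θ)) ∂qt.measure
      = ∫ t in Set.Ioc (0:ℝ) T, (-(x t) - bt t) * (qt T - qt t) := by
    rw [← stieltjes_parts T hT qt (fun t => -(x t) - bt t) (hx.neg.sub hbt)]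
    exact setIntegral_congr_fun measurableSet_Ioc fun θ hθ => (hXBt θ hθ).symm
  -- endpoint identities
  have hpsT : ps T = qs T := by have h := hπs T; rw [hπsT] at h; linarith
  have hptT : pt T = qt T := by have h := hπt T; rw [hπtT] at h; linarith
  -- split identities
  have hsplit_s : ∫ t in Set.Ioc (0:ℝ) T, πs t * (x t - bs t)
      = (∫ θ in Set.Ioc (0:ℝ) T, Ys θ ∂ps.measure)
        - ∫ θ in Set.Ioc (0:ℝ) T, Ys θ ∂qs.measure := by
    have e : ∀ t, πs t * (x t - bs t)
        = (x t - bs t) * (qs T - qs t) - (x t - bs t) * (ps T - ps t) := by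
      intro t; rw [hπs t, hpsT]; ring
    calc ∫ t in Set.Ioc (0:ℝ) T, πs t * (x t - bs t)
        = ∫ t in Set.Ioc (0:ℝ) T,
            ((x t - bs t) * (qs T - qs t) - (x t - bs t) * (ps T - ps t)) := by
          simp only [e]
      _ = (∫ t in Set.Ioc (0:ℝ) T, (x t - bs t) * (qs T - qs t))
            - ∫ t in Set.Ioc (0:ℝ) T, (x t - bs t) * (ps T - ps t) :=
          integral_sub (hprod _ qs (hx.sub hbs)) (hprod _ ps (hx.sub hbs))
      _ = (∫ θ in Set.Ioc (0:ℝ) T, (-(Ys θ)) ∂qs.measure)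
            - ∫ θ in Set.Ioc (0:ℝ) T, (-(Ys θ)) ∂ps.measure := by rw [hQs, hPs]
      _ = (∫ θ in Set.Ioc (0:ℝ) T, Ys θ ∂ps.measure)
            - ∫ θ in Set.Ioc (0:ℝ) T, Ys θ ∂qs.measure := by
          rw [integral_neg, integral_neg]; ring
  have hsplit_t : ∫ t in Set.Ioc (0:ℝ) T, πt t * (-(x t) - bt t)
      = (∫ θ in Set.Ioc (0:ℝ) T, Yt θ ∂pt.measure)
        - ∫ θ in Set.Ioc (0:ℝ) T, Yt θ ∂qt.measure := by
    have e : ∀ t, πt t * (-(x t) - bt t)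
        = (-(x t) - bt t) * (qt T - qt t) - (-(x t) - bt t) * (pt T - pt t) := by
      intro t; rw [hπt t, hptT]; ring
    calc ∫ t in Set.Ioc (0:ℝ) T, πt t * (-(x t) - bt t)
        = ∫ t in Set.Ioc (0:ℝ) T,
            ((-(x t) - bt t) * (qt T - qt t) - (-(x t) - bt t) * (pt T - pt t)) := by
          simp only [e]
      _ = (∫ t in Set.Ioc (0:ℝ) T, (-(x t) - bt t) * (qt T - qt t))
            - ∫ t in Set.Ioc (0:ℝ) T, (-(x t) - bt t) * (pt T - pt t) :=
          integral_sub (hprod _ qt (hx.neg.sub hbt)) (hprod _ pt (hx.neg.sub hbt))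
      _ = (∫ θ in Set.Ioc (0:ℝ) T, (-(Yt θ)) ∂qt.measure)
            - ∫ θ in Set.Ioc (0:ℝ) T, (-(Yt θ)) ∂pt.measure := by rw [hQt, hPt]
      _ = (∫ θ in Set.Ioc (0:ℝ) T, Yt θ ∂pt.measure)
            - ∫ θ in Set.Ioc (0:ℝ) T, Yt θ ∂qt.measure := by
          rw [integral_neg, integral_neg]; ring
  -- positivity and domination for the storage terms
  have hYs_ps : 0 ≤ ∫ θ in Set.Ioc (0:ℝ) T, Ys θ ∂ps.measure :=
    setIntegral_nonneg measurableSet_Ioc fun θ hθ => (hYsfeas θ (hsub hθ)).1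
  have hYt_pt : 0 ≤ ∫ θ in Set.Ioc (0:ℝ) T, Yt θ ∂pt.measure :=
    setIntegral_nonneg measurableSet_Ioc fun θ hθ => (hYtfeas θ (hsub hθ)).1
  -- continuity of the storages
  have hYscont : ContinuousOn Ys (Set.Icc 0 T) := by
    have h1 := intervalIntegral.continuousOn_primitive_interval'
      hbsint (Set.left_mem_uIcc)
    have h2 := intervalIntegral.continuousOn_primitive_interval'
      hxint (Set.left_mem_uIcc)
    have : ContinuousOn Ys (Set.uIcc (0:ℝ) T) := by
      rw [funext hYs]; exact h1.sub h2
    rwa [Set.uIcc_of_le hT.le] at this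
  have hYtcont : ContinuousOn Yt (Set.Icc 0 T) := by
    have h1 := intervalIntegral.continuousOn_primitive_interval'
      hbtint (Set.left_mem_uIcc)
    have h2 := intervalIntegral.continuousOn_primitive_interval'
      hxint (Set.left_mem_uIcc)
    have : ContinuousOn Yt (Set.uIcc (0:ℝ) T) := by
      rw [funext hYt]; exact h1.add h2
    rwa [Set.uIcc_of_le hT.le] at this
  have hYsint : IntegrableOn Ys (Set.Ioc 0 T) qs.measure := by
    refine Integrable.mono' hint4
      ((hYscont.mono hsub).aestronglyMeasurable measurableSet_Ioc) ?_
    rw [ae_restrict_iff' measurableSet_Ioc]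
    refine Filter.Eventually.of_forall fun θ hθ => ?_
    have h := hYsfeas θ (hsub hθ)
    rw [Real.norm_eq_abs, abs_of_nonneg h.1]
    exact h.2
  have hYtint : IntegrableOn Yt (Set.Ioc 0 T) qt.measure := by
    refine Integrable.mono' hint5
      ((hYtcont.mono hsub).aestronglyMeasurable measurableSet_Ioc) ?_
    rw [ae_restrict_iff' measurableSet_Ioc]
    refine Filter.Eventually.of_forall fun θ hθ => ?_
    have h := hYtfeas θ (hsub hθ)
    rw [Real.norm_eq_abs, abs_of_nonneg h.1]
    exact h.2
  have hYs_qs : (∫ θ in Set.Ioc (0:ℝ) T, Ys θ ∂qs.measure)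
      ≤ ∫ θ in Set.Ioc (0:ℝ) T, Us θ ∂qs.measure :=
    setIntegral_mono_on hYsint hint4 measurableSet_Ioc fun θ hθ => (hYsfeas θ (hsub hθ)).2
  have hYt_qt : (∫ θ in Set.Ioc (0:ℝ) T, Yt θ ∂qt.measure)
      ≤ ∫ θ in Set.Ioc (0:ℝ) T, Ut θ ∂qt.measure :=
    setIntegral_mono_on hYtint hint5 measurableSet_Ioc fun θ hθ => (hYtfeas θ (hsub hθ)).2
  -- splitting the dual pairing
  have hA : ∫ t in Set.Ioc (0:ℝ) T, (πs t - πt t) * x t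
      = (∫ t in Set.Ioc (0:ℝ) T, πs t * (x t - bs t))
        + (∫ t in Set.Ioc (0:ℝ) T, πt t * (-(x t) - bt t))
        + ∫ t in Set.Ioc (0:ℝ) T, (bs t * πs t + bt t * πt t) := by
    have hJ1 : IntegrableOn (fun t => πs t * (x t - bs t)) (Set.Ioc 0 T) volume :=
      hmuls _ (hx.sub hbs)
    have hJ2 : IntegrableOn (fun t => πt t * (-(x t) - bt t)) (Set.Ioc 0 T) volume :=
      hmult _ (hx.neg.sub hbt)
    have hJ3 : IntegrableOn (fun t => bs t * πs t + bt t * πt t) (Set.Ioc 0 T) volume :=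
      hint2.1
    have hJ12 : IntegrableOn
        (fun t => πs t * (x t - bs t) + πt t * (-(x t) - bt t)) (Set.Ioc 0 T) volume :=
      hJ1.add hJ2
    calc ∫ t in Set.Ioc (0:ℝ) T, (πs t - πt t) * x t
        = ∫ t in Set.Ioc (0:ℝ) T,
            ((πs t * (x t - bs t) + πt t * (-(x t) - bt t)) + (bs t * πs t + bt t * πt t)) :=
          integral_congr_ae (Filter.Eventually.of_forall fun t => by ring)
      _ = (∫ t in Set.Ioc (0:ℝ) T, (πs t * (x t - bs t) + πt t * (-(x t) - bt t)))
            + ∫ t in Set.Ioc (0:ℝ) T, (bs t * πs t + bt t * πt t) := integral_add hJ12 hJ3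
      _ = ((∫ t in Set.Ioc (0:ℝ) T, πs t * (x t - bs t))
            + (∫ t in Set.Ioc (0:ℝ) T, πt t * (-(x t) - bt t)))
            + ∫ t in Set.Ioc (0:ℝ) T, (bs t * πs t + bt t * πt t) := by
          rw [integral_add hJ1 hJ2]
  -- the pointwise inequality step
  have hstep1 : (∫ t in Set.Ioc (0:ℝ) T, (πs t - πt t) * x t)
      ≤ ∫ t in Set.Ioc (0:ℝ) T, (c t * x t - u t * ρ t) := by
    refine setIntegral_mono_on ?_ (hint1.1.sub hint3.1) measurableSet_Ioc ?_
    · exact hx.bdd_mul (hπs_aesm.sub hπt_aesm)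
        (by filter_upwards [hπs_bdd, hπt_bdd] with t h1 h2
            exact (norm_sub_le _ _).trans (add_le_add h1 h2))
    · intro θ hθ
      obtain ⟨hx0, hxu'⟩ := hxu θ (hsub hθ)
      have hd := hdualfeas θ (hsub hθ)
      have hρ' := hρ θ (hsub hθ)
      have k1 : 0 ≤ (c θ - (πs θ - πt θ + ρ θ)) * x θ := mul_nonneg (by linarith) hx0
      have k2 : 0 ≤ (-(ρ θ)) * (u θ - x θ) := mul_nonneg (by linarith) (by linarith)
      nlinarith [k1, k2]
  -- final assembly
  rw [ge_iff_le, intervalIntegral.integral_of_le hT.le, intervalIntegral.integral_of_le hT.le,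
    intervalIntegral.integral_of_le hT.le]
  have hcux : ∫ t in Set.Ioc (0:ℝ) T, (c t * x t - u t * ρ t)
      = (∫ t in Set.Ioc (0:ℝ) T, c t * x t) - ∫ t in Set.Ioc (0:ℝ) T, u t * ρ t :=
    integral_sub hint1.1 hint3.1
  linarith [hstep1, hA, hsplit_s, hsplit_t, hYs_ps, hYt_pt, hYs_qs, hYt_qt, hcux]
end

section
/- Augmenting along a cycle preserves flow conservation: in a finite directed graph with transit times, let x be a flow over time and let W : (v₁,θ₁),…,(v_q,θ_q) with (v₁,θ₁) = (v_q,θ_q) be a cycle of node-time pairs whose consecutive pairs are arc- or node-linked. For z* > 0 and γ > 0, define z_e(θ) = z* if e = (v_k, v_{k+1}) ∈ E and θ ∈ [θ_k, θ_k + γ), z_e(θ) = −z* if (v_{k+1}, v_k) ∈ E (a backward traversal) and θ ∈ [θ_{k+1}, θ_{k+1} + γ), and z_e(θ) = 0 otherwise (summing contributions if an arc is used multiple times). Then the flow x + z satisfies the same flow conservation equation (1) with the same supply/demand functions B_v, with storage Y'_v differing from Y_v only on the union over node-linked steps k (v_k = v_{k+1}) of the intervals between θ_k and θ_{k+1} (extended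 by γ), and the change in storage is bounded in absolute value by z*·γ·q. -/
open MeasureTheory

/-- The cumulative inflow `X(θ) = ∫₀^θ x`. -/
noncomputable def cumFlow (x : ℝ → ℝ) (θ : ℝ) : ℝ := ∫ t in (0:ℝ)..θ, x t

noncomputable def acGAux (γ a θ : ℝ) : ℝ := min (max θ a) (a + γ) - a

lemma acGAux_nonneg {γ a θ : ℝ} (hγ : 0 ≤ γ) : 0 ≤ acGAux γ a θ := by
  have h1 : a ≤ max θ a := le_max_right _ _
  have h2 : a ≤ a + γ := by linarith
  have : a ≤ min (max θ a) (a + γ) := le_min h1 h2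
  simp only [acGAux]; linarith

lemma acGAux_le {γ a θ : ℝ} : acGAux γ a θ ≤ γ := by
  have : min (max θ a) (a + γ) ≤ a + γ := min_le_right _ _
  simp only [acGAux]; linarith

lemma acGAux_shift (γ a τ' θ : ℝ) : acGAux γ a (θ - τ') = acGAux γ (a + τ') θ := by
  simp only [acGAux, min_def, max_def]
  split_ifs <;> linarith

lemma acGAux_of_le {γ a θ : ℝ} (hγ : 0 ≤ γ) (h : θ ≤ a) : acGAux γ a θ = 0 := by
  simp only [acGAux, max_eq_right h, min_eq_left (by linarith : a ≤ a + γ)]; ring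

lemma acGAux_of_ge {γ a θ : ℝ} (hγ : 0 ≤ γ) (h : a + γ ≤ θ) : acGAux γ a θ = γ := by
  simp only [acGAux, max_eq_left (by linarith : a ≤ θ), min_eq_right h]; ring

lemma acIntInd (a b θ : ℝ) (ha : 0 ≤ a) (hab : a ≤ b) :
    ∫ s in (0:ℝ)..θ, (Set.Ico a b).indicator (fun _ => (1:ℝ)) s = min (max θ a) b - a := by
  have hae : ∫ s in (0:ℝ)..θ, (Set.Ico a b).indicator (fun _ => (1:ℝ)) s
      = ∫ s in (0:ℝ)..θ, (Set.Ioc a b).indicator (fun _ => (1:ℝ)) s := by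
    apply intervalIntegral.integral_congr_ae
    filter_upwards [indicator_ae_eq_of_ae_eq_set (μ := volume) Ico_ae_eq_Ioc
      (f := fun _ : ℝ => (1:ℝ))] with s hs _ using hs
  rw [hae]
  rcases le_or_gt 0 θ with hθ | hθ
  · rw [intervalIntegral.integral_of_le hθ, ← MeasureTheory.integral_indicator measurableSet_Ioc,
      Set.indicator_indicator, Set.Ioc_inter_Ioc, MeasureTheory.integral_indicator measurableSet_Ioc,
      MeasureTheory.setIntegral_const, Real.volume_real_Ioc, smul_eq_mul, mul_one]
    rcases le_total θ a with h | h <;> rcases le_total θ b with h2 | h2 <;>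
      simp [min_def, max_def] <;> split_ifs <;> linarith
  · rw [intervalIntegral.integral_of_ge hθ.le, ← MeasureTheory.integral_indicator measurableSet_Ioc,
      Set.indicator_indicator, Set.Ioc_inter_Ioc, MeasureTheory.integral_indicator measurableSet_Ioc,
      MeasureTheory.setIntegral_const, Real.volume_real_Ioc, smul_eq_mul, mul_one]
    rcases le_total θ a with h | h <;> rcases le_total θ b with h2 | h2 <;>
      simp [min_def, max_def] <;> split_ifs <;> linarith

lemma acII (C1 C2 C3 : Prop) [Decidable C1] [Decidable C2] [Decidable C3] (a b u v : ℝ) :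
    IntervalIntegrable (fun θ => if C1 ∧ C2 ∧ C3 ∧ θ ∈ Set.Ico a b then (1:ℝ) else 0) volume u v := by
  by_cases h : C1 ∧ C2 ∧ C3
  · have he : (fun θ => if C1 ∧ C2 ∧ C3 ∧ θ ∈ Set.Ico a b then (1:ℝ) else 0)
        = (Set.Ico a b).indicator (fun _ => (1:ℝ)) := by
      funext θ; by_cases hm : θ ∈ Set.Ico a b <;>
        simp [h.1, h.2.1, h.2.2, hm, Set.indicator_apply]
    rw [he]
    constructor <;>
      exact (integrableOn_const measure_Ioc_lt_top.ne).indicator measurableSet_Ico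
  · have he : (fun θ => if C1 ∧ C2 ∧ C3 ∧ θ ∈ Set.Ico a b then (1:ℝ) else 0) = fun _ => (0:ℝ) := by
      funext θ; exact if_neg (by tauto)
    rw [he]; exact intervalIntegrable_const

lemma acInt (C1 C2 C3 : Prop) [Decidable C1] [Decidable C2] [Decidable C3]
    (a γ θ : ℝ) (ha : 0 ≤ a) (hγ : 0 ≤ γ) :
    (∫ s in (0:ℝ)..θ, if C1 ∧ C2 ∧ C3 ∧ s ∈ Set.Ico a (a + γ) then (1:ℝ) else 0)
      = if C1 ∧ C2 ∧ C3 then acGAux γ a θ else 0 := by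
  by_cases h : C1 ∧ C2 ∧ C3
  · rw [if_pos h]
    have he : (fun s => if C1 ∧ C2 ∧ C3 ∧ s ∈ Set.Ico a (a + γ) then (1:ℝ) else 0)
        = (Set.Ico a (a + γ)).indicator (fun _ => (1:ℝ)) := by
      funext s; by_cases hm : s ∈ Set.Ico a (a + γ) <;>
        simp [h.1, h.2.1, h.2.2, hm, Set.indicator_apply]
    rw [he, acIntInd a (a + γ) θ ha (by linarith)]; rfl
  · rw [if_neg h]
    have he : (fun s : ℝ => if C1 ∧ C2 ∧ C3 ∧ s ∈ Set.Ico a (a + γ) then (1:ℝ) else 0)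
        = fun _ => (0:ℝ) := by
      funext s; exact if_neg (by tauto)
    rw [he]; simp

lemma acSum {V : Type*} [DecidableEq V] (s : Finset (V × V)) (e₀ : V × V)
    (P : V × V → Prop) [DecidablePred P] (c : V × V → ℝ) :
    (∑ e ∈ s, if e₀ = e ∧ P e then c e else 0) = if e₀ ∈ s ∧ P e₀ then c e₀ else 0 := by
  have h1 : ∀ e ∈ s, (if e₀ = e ∧ P e then c e else 0)
      = if e₀ = e then (if P e then c e else 0) else 0 := by
    intro e _; by_cases h1 : e₀ = e <;> by_cases h2 : P e <;> simp [h1, h2]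
  rw [Finset.sum_congr rfl h1, Finset.sum_ite_eq]
  by_cases h1 : e₀ ∈ s <;> by_cases h2 : P e₀ <;> simp [h1, h2]

lemma acTel (q : ℕ) (f : Fin (q + 1) → ℝ) :
    ∑ k : Fin q, (f k.succ - f k.castSucc) = f (Fin.last q) - f 0 := by
  induction q with
  | zero => simp
  | succ n ih =>
    rw [Fin.sum_univ_castSucc]
    have h := ih (fun j => f j.castSucc)
    have h2 : ∀ k : Fin n, f (k.castSucc).succ - f (k.castSucc).castSucc
        = (fun j => f j.castSucc) k.succ - (fun j => f j.castSucc) k.castSucc := by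
      intro k
      have : (k.castSucc).succ = (k.succ).castSucc := Fin.succ_castSucc k
      rw [this]
    rw [Finset.sum_congr rfl fun k _ => h2 k, h]
    have h3 : (Fin.last n).succ = Fin.last (n + 1) := Fin.succ_last n
    have h4 : ((0 : Fin (n + 1)).castSucc) = 0 := rfl
    rw [h3, h4]
    ring


/-- Augmenting a flow `x` by a constant rate `z*` for `γ` time units
along a cycle `W` of node-time pairs (with arc-, backward-arc- or node-links)
preserves flow conservation with the same supply/demand functions `B_v`: the new
storage `Y'` differs from `Y` only on the union, over node-linked steps, of the
intervals between `θ_k` and `θ_{k+1}` extended by `γ`, and the change in storage is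
bounded in absolute value by `z* · γ · q`. -/
theorem augment_along_cycle
    {V : Type*} [Fintype V] [DecidableEq V]
    (E : Finset (V × V))
    (hE : ∀ v w : V, (v, w) ∈ E → (w, v) ∉ E)
    (hEloop : ∀ v : V, (v, v) ∉ E)
    (τ : V × V → ℝ)
    (x : V × V → ℝ → ℝ) (B : V → ℝ → ℝ)
    (hxint : ∀ e, ∀ a b : ℝ, IntervalIntegrable (x e) volume a b)
    (q : ℕ) (hq : 0 < q)
    (w : Fin (q + 1) → V) (t : Fin (q + 1) → ℝ)
    (htnn : ∀ k, 0 ≤ t k)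
    (hcycle : w (Fin.last q) = w 0 ∧ t (Fin.last q) = t 0)
    (hlink : ∀ k : Fin q,
      ((w k.castSucc, w k.succ) ∈ E ∧
        t k.succ = t k.castSucc + τ (w k.castSucc, w k.succ)) ∨
      ((w k.succ, w k.castSucc) ∈ E ∧
        t k.succ = t k.castSucc - τ (w k.succ, w k.castSucc)) ∨
      (w k.castSucc = w k.succ))
    (zstar γ : ℝ) (hz : 0 < zstar) (hγ : 0 < γ)
    (z : V × V → ℝ → ℝ)
    (hzdef : ∀ e θ, z e θ =
      zstar * ∑ k : Fin q,
        ((if (w k.castSucc, w k.succ) = e ∧ e ∈ E ∧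
              t k.succ = t k.castSucc + τ e ∧
              θ ∈ Set.Ico (t k.castSucc) (t k.castSucc + γ)
          then (1:ℝ) else 0) -
         (if (w k.succ, w k.castSucc) = e ∧ e ∈ E ∧
              t k.succ = t k.castSucc - τ e ∧
              θ ∈ Set.Ico (t k.succ) (t k.succ + γ)
          then (1:ℝ) else 0)))
    (Y Y' : V → ℝ → ℝ)
    (hY : ∀ v θ, Y v θ = B v θ
        - ∑ e ∈ E.filter (fun e => e.1 = v), cumFlow (x e) θ
        + ∑ e ∈ E.filter (fun e => e.2 = v), cumFlow (x e) (θ - τ e))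
    (hY' : ∀ v θ, Y' v θ = B v θ
        - ∑ e ∈ E.filter (fun e => e.1 = v), cumFlow (fun s => x e s + z e s) θ
        + ∑ e ∈ E.filter (fun e => e.2 = v), cumFlow (fun s => x e s + z e s) (θ - τ e)) :
    (∀ v : V, ∀ θ : ℝ,
      θ ∉ (⋃ k ∈ {k : Fin q | w k.castSucc = w k.succ},
        Set.Ico (min (t k.castSucc) (t k.succ)) (max (t k.castSucc) (t k.succ) + γ)) →
      Y' v θ = Y v θ) ∧
    (∀ v : V, ∀ θ : ℝ, |Y' v θ - Y v θ| ≤ zstar * γ * q) := by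
  -- integrability of z
  have hzint : ∀ e (u u' : ℝ), IntervalIntegrable (z e) volume u u' := by
    intro e u u'
    have hze : z e = fun θ => zstar * ∑ k : Fin q,
        ((if (w k.castSucc, w k.succ) = e ∧ e ∈ E ∧
              t k.succ = t k.castSucc + τ e ∧
              θ ∈ Set.Ico (t k.castSucc) (t k.castSucc + γ)
          then (1:ℝ) else 0) -
         (if (w k.succ, w k.castSucc) = e ∧ e ∈ E ∧
              t k.succ = t k.castSucc - τ e ∧
              θ ∈ Set.Ico (t k.succ) (t k.succ + γ)
          then (1:ℝ) else 0)) := funext fun θ => hzdef e θ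
    rw [hze]
    apply IntervalIntegrable.const_mul
    have hsum : (fun θ : ℝ => ∑ k : Fin q,
        ((if (w k.castSucc, w k.succ) = e ∧ e ∈ E ∧
              t k.succ = t k.castSucc + τ e ∧
              θ ∈ Set.Ico (t k.castSucc) (t k.castSucc + γ)
          then (1:ℝ) else 0) -
         (if (w k.succ, w k.castSucc) = e ∧ e ∈ E ∧
              t k.succ = t k.castSucc - τ e ∧
              θ ∈ Set.Ico (t k.succ) (t k.succ + γ)
          then (1:ℝ) else 0)))
        = ∑ k : Fin q, (fun θ : ℝ =>
          ((if (w k.castSucc, w k.succ) = e ∧ e ∈ E ∧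
              t k.succ = t k.castSucc + τ e ∧
              θ ∈ Set.Ico (t k.castSucc) (t k.castSucc + γ)
          then (1:ℝ) else 0) -
         (if (w k.succ, w k.castSucc) = e ∧ e ∈ E ∧
              t k.succ = t k.castSucc - τ e ∧
              θ ∈ Set.Ico (t k.succ) (t k.succ + γ)
          then (1:ℝ) else 0))) := by
      funext θ; rw [Finset.sum_apply]
    rw [hsum]
    apply IntervalIntegrable.sum
    intro k _
    exact (acII _ _ _ _ _ _ _).sub (acII _ _ _ _ _ _ _)
  have hadd : ∀ e (θ' : ℝ), cumFlow (fun s => x e s + z e s) θ'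
      = cumFlow (x e) θ' + cumFlow (z e) θ' := fun e θ' =>
    intervalIntegral.integral_add (hxint e 0 θ') (hzint e 0 θ')
  have hcum : ∀ e (θ' : ℝ), cumFlow (z e) θ' = zstar * ∑ k : Fin q,
      ((if (w k.castSucc, w k.succ) = e ∧ e ∈ E ∧ t k.succ = t k.castSucc + τ e
          then acGAux γ (t k.castSucc) θ' else 0)
     - (if (w k.succ, w k.castSucc) = e ∧ e ∈ E ∧ t k.succ = t k.castSucc - τ e
          then acGAux γ (t k.succ) θ' else 0)) := by
    intro e θ'
    show (∫ s in (0:ℝ)..θ', z e s) = _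
    simp only [hzdef e]
    rw [intervalIntegral.integral_const_mul]
    congr 1
    rw [intervalIntegral.integral_finset_sum
      (fun k _ => (acII _ _ _ _ _ _ _).sub (acII _ _ _ _ _ _ _))]
    refine Finset.sum_congr rfl fun k _ => ?_
    rw [intervalIntegral.integral_sub (acII _ _ _ _ _ _ _) (acII _ _ _ _ _ _ _),
      acInt _ _ _ _ _ _ (htnn _) hγ.le, acInt _ _ _ _ _ _ (htnn _) hγ.le]
  have key : ∀ v θ, Y' v θ - Y v θ = zstar * ∑ k : Fin q,
      (if w k.castSucc = w k.succ ∧ w k.castSucc = v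
        then acGAux γ (t k.castSucc) θ - acGAux γ (t k.succ) θ else 0) := by
    intro v θ
    have hdiff : Y' v θ - Y v θ =
        (∑ e ∈ E.filter (fun e => e.2 = v), cumFlow (z e) (θ - τ e))
        - (∑ e ∈ E.filter (fun e => e.1 = v), cumFlow (z e) θ) := by
      rw [hY' v θ, hY v θ]
      simp only [hadd]
      rw [Finset.sum_add_distrib, Finset.sum_add_distrib]
      ring
    rw [hdiff]
    simp only [hcum]
    rw [← Finset.mul_sum, ← Finset.mul_sum, ← mul_sub]
    congr 1
    rw [Finset.sum_comm (s := E.filter (fun e => e.2 = v)) (t := (Finset.univ : Finset (Fin q))),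
      Finset.sum_comm (s := E.filter (fun e => e.1 = v)) (t := (Finset.univ : Finset (Fin q))),
      ← Finset.sum_sub_distrib]
    have hAk : ∀ k : Fin q,
        ((∑ e ∈ E.filter (fun e => e.2 = v),
          ((if (w k.castSucc, w k.succ) = e ∧ e ∈ E ∧ t k.succ = t k.castSucc + τ e
              then acGAux γ (t k.castSucc) (θ - τ e) else 0)
          - (if (w k.succ, w k.castSucc) = e ∧ e ∈ E ∧ t k.succ = t k.castSucc - τ e
              then acGAux γ (t k.succ) (θ - τ e) else 0)))
        - (∑ e ∈ E.filter (fun e => e.1 = v),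
          ((if (w k.castSucc, w k.succ) = e ∧ e ∈ E ∧ t k.succ = t k.castSucc + τ e
              then acGAux γ (t k.castSucc) θ else 0)
          - (if (w k.succ, w k.castSucc) = e ∧ e ∈ E ∧ t k.succ = t k.castSucc - τ e
              then acGAux γ (t k.succ) θ else 0))))
        = (((if w k.succ = v then acGAux γ (t k.succ) θ else 0)
            - (if w k.castSucc = v then acGAux γ (t k.castSucc) θ else 0))
          + (if w k.castSucc = w k.succ ∧ w k.castSucc = v
              then acGAux γ (t k.castSucc) θ - acGAux γ (t k.succ) θ else 0)) := by
      intro k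
      rw [Finset.sum_sub_distrib, Finset.sum_sub_distrib,
        acSum _ _ (fun e => e ∈ E ∧ t k.succ = t k.castSucc + τ e) _,
        acSum _ _ (fun e => e ∈ E ∧ t k.succ = t k.castSucc - τ e) _,
        acSum _ _ (fun e => e ∈ E ∧ t k.succ = t k.castSucc + τ e) _,
        acSum _ _ (fun e => e ∈ E ∧ t k.succ = t k.castSucc - τ e) _]
      rcases hlink k with ⟨hf, htf⟩ | ⟨hb, htb⟩ | hn
      · have hnb : (w k.succ, w k.castSucc) ∉ E := hE _ _ hf
        have hne : ¬ (w k.castSucc = w k.succ) := by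
          intro h; rw [h] at hf; exact hEloop _ hf
        have hval : acGAux γ (t k.castSucc) (θ - τ (w k.castSucc, w k.succ))
            = acGAux γ (t k.succ) θ := by rw [acGAux_shift, ← htf]
        rw [hval,
          if_neg (show ¬((w k.succ, w k.castSucc) ∈ E.filter (fun e => e.2 = v) ∧
            (w k.succ, w k.castSucc) ∈ E ∧ t k.succ = t k.castSucc - τ (w k.succ, w k.castSucc))
            from fun h => hnb h.2.1),
          if_neg (show ¬((w k.succ, w k.castSucc) ∈ E.filter (fun e => e.1 = v) ∧
            (w k.succ, w k.castSucc) ∈ E ∧ t k.succ = t k.castSucc - τ (w k.succ, w k.castSucc))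
            from fun h => hnb h.2.1),
          if_congr (show ((w k.castSucc, w k.succ) ∈ E.filter (fun e => e.2 = v) ∧
            (w k.castSucc, w k.succ) ∈ E ∧ t k.succ = t k.castSucc + τ (w k.castSucc, w k.succ))
            ↔ (w k.succ = v) from by simp [Finset.mem_filter, hf, htf]) rfl rfl,
          if_congr (show ((w k.castSucc, w k.succ) ∈ E.filter (fun e => e.1 = v) ∧
            (w k.castSucc, w k.succ) ∈ E ∧ t k.succ = t k.castSucc + τ (w k.castSucc, w k.succ))
            ↔ (w k.castSucc = v) from by simp [Finset.mem_filter, hf, htf]) rfl rfl,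
          if_neg (show ¬(w k.castSucc = w k.succ ∧ w k.castSucc = v) from fun h => hne h.1)]
        ring
      · have hnf : (w k.castSucc, w k.succ) ∉ E := hE _ _ hb
        have hne : ¬ (w k.castSucc = w k.succ) := by
          intro h; rw [h] at hb; exact hEloop _ hb
        have hval : acGAux γ (t k.succ) (θ - τ (w k.succ, w k.castSucc))
            = acGAux γ (t k.castSucc) θ := by
          rw [acGAux_shift]
          congr 1
          linarith [htb]
        rw [hval,
          if_neg (show ¬((w k.castSucc, w k.succ) ∈ E.filter (fun e => e.2 = v) ∧
            (w k.castSucc, w k.succ) ∈ E ∧ t k.succ = t k.castSucc + τ (w k.castSucc, w k.succ))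
            from fun h => hnf h.2.1),
          if_neg (show ¬((w k.castSucc, w k.succ) ∈ E.filter (fun e => e.1 = v) ∧
            (w k.castSucc, w k.succ) ∈ E ∧ t k.succ = t k.castSucc + τ (w k.castSucc, w k.succ))
            from fun h => hnf h.2.1),
          if_congr (show ((w k.succ, w k.castSucc) ∈ E.filter (fun e => e.2 = v) ∧
            (w k.succ, w k.castSucc) ∈ E ∧ t k.succ = t k.castSucc - τ (w k.succ, w k.castSucc))
            ↔ (w k.castSucc = v) from by simp [Finset.mem_filter, hb, htb]) rfl rfl,
          if_congr (show ((w k.succ, w k.castSucc) ∈ E.filter (fun e => e.1 = v) ∧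
            (w k.succ, w k.castSucc) ∈ E ∧ t k.succ = t k.castSucc - τ (w k.succ, w k.castSucc))
            ↔ (w k.succ = v) from by simp [Finset.mem_filter, hb, htb]) rfl rfl,
          if_neg (show ¬(w k.castSucc = w k.succ ∧ w k.castSucc = v) from fun h => hne h.1)]
        ring
      · have hf' : (w k.castSucc, w k.succ) ∉ E := by rw [hn]; exact hEloop _
        have hb' : (w k.succ, w k.castSucc) ∉ E := by rw [hn]; exact hEloop _
        rw [if_neg (show ¬((w k.castSucc, w k.succ) ∈ E.filter (fun e => e.2 = v) ∧
            (w k.castSucc, w k.succ) ∈ E ∧ t k.succ = t k.castSucc + τ (w k.castSucc, w k.succ))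
            from fun h => hf' h.2.1),
          if_neg (show ¬((w k.castSucc, w k.succ) ∈ E.filter (fun e => e.1 = v) ∧
            (w k.castSucc, w k.succ) ∈ E ∧ t k.succ = t k.castSucc + τ (w k.castSucc, w k.succ))
            from fun h => hf' h.2.1),
          if_neg (show ¬((w k.succ, w k.castSucc) ∈ E.filter (fun e => e.2 = v) ∧
            (w k.succ, w k.castSucc) ∈ E ∧ t k.succ = t k.castSucc - τ (w k.succ, w k.castSucc))
            from fun h => hb' h.2.1),
          if_neg (show ¬((w k.succ, w k.castSucc) ∈ E.filter (fun e => e.1 = v) ∧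
            (w k.succ, w k.castSucc) ∈ E ∧ t k.succ = t k.castSucc - τ (w k.succ, w k.castSucc))
            from fun h => hb' h.2.1),
          if_congr (show (w k.castSucc = w k.succ ∧ w k.castSucc = v) ↔ (w k.castSucc = v)
            from by simp [hn]) rfl rfl]
        by_cases hv : w k.castSucc = v
        · rw [if_pos hv, if_pos (hn.symm.trans hv), if_pos hv]
          ring
        · rw [if_neg hv, if_neg (fun h => hv (hn.trans h)), if_neg hv]
          ring
    calc ∑ k : Fin q, _ = ∑ k : Fin q,
          (((if w k.succ = v then acGAux γ (t k.succ) θ else 0)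
            - (if w k.castSucc = v then acGAux γ (t k.castSucc) θ else 0))
          + (if w k.castSucc = w k.succ ∧ w k.castSucc = v
              then acGAux γ (t k.castSucc) θ - acGAux γ (t k.succ) θ else 0)) :=
        Finset.sum_congr rfl fun k _ => hAk k
      _ = (∑ k : Fin q,
          ((if w k.succ = v then acGAux γ (t k.succ) θ else 0)
            - (if w k.castSucc = v then acGAux γ (t k.castSucc) θ else 0)))
          + ∑ k : Fin q, (if w k.castSucc = w k.succ ∧ w k.castSucc = v
              then acGAux γ (t k.castSucc) θ - acGAux γ (t k.succ) θ else 0) :=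
        Finset.sum_add_distrib
      _ = ∑ k : Fin q, (if w k.castSucc = w k.succ ∧ w k.castSucc = v
              then acGAux γ (t k.castSucc) θ - acGAux γ (t k.succ) θ else 0) := by
        rw [acTel q (fun j => if w j = v then acGAux γ (t j) θ else 0)]
        simp [hcycle.1, hcycle.2]
  constructor
  · intro v θ hθ
    have h0 : Y' v θ - Y v θ = 0 := by
      rw [key v θ]
      refine mul_eq_zero.2 (Or.inr (Finset.sum_eq_zero fun k _ => ?_))
      split_ifs with hk
      · obtain ⟨hn, hv⟩ := hk
        simp only [Set.mem_iUnion, Set.mem_setOf_eq, not_exists] at hθ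
        have hmem := hθ k hn
        rw [Set.mem_Ico, not_and_or, not_le, not_lt] at hmem
        rcases hmem with h | h
        · rw [acGAux_of_le hγ.le (le_of_lt (lt_of_lt_of_le h (min_le_left _ _))),
            acGAux_of_le hγ.le (le_of_lt (lt_of_lt_of_le h (min_le_right _ _))), sub_self]
        · rw [acGAux_of_ge hγ.le (by linarith [le_max_left (t k.castSucc) (t k.succ)]),
            acGAux_of_ge hγ.le (by linarith [le_max_right (t k.castSucc) (t k.succ)]), sub_self]
      · rfl
    linarith [h0]
  · intro v θ
    rw [key v θ, abs_mul, abs_of_pos hz]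
    have hterm : ∀ k : Fin q,
        |if w k.castSucc = w k.succ ∧ w k.castSucc = v
          then acGAux γ (t k.castSucc) θ - acGAux γ (t k.succ) θ else 0| ≤ γ := by
      intro k
      split_ifs with hk
      · rw [abs_le]
        constructor <;>
          nlinarith [acGAux_nonneg (γ := γ) (a := t k.castSucc) (θ := θ) hγ.le,
            acGAux_nonneg (γ := γ) (a := t k.succ) (θ := θ) hγ.le,
            acGAux_le (γ := γ) (a := t k.castSucc) (θ := θ),
            acGAux_le (γ := γ) (a := t k.succ) (θ := θ)]
      · simp [hγ.le]
    have hsum : |∑ k : Fin q,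
        (if w k.castSucc = w k.succ ∧ w k.castSucc = v
          then acGAux γ (t k.castSucc) θ - acGAux γ (t k.succ) θ else 0)| ≤ γ * q := by
      calc |∑ k : Fin q, _| ≤ ∑ k : Fin q,
            |if w k.castSucc = w k.succ ∧ w k.castSucc = v
              then acGAux γ (t k.castSucc) θ - acGAux γ (t k.succ) θ else 0| :=
          Finset.abs_sum_le_sum_abs _ _
        _ ≤ ∑ _k : Fin q, γ := Finset.sum_le_sum fun k _ => hterm k
        _ = γ * q := by simp [Finset.sum_const, mul_comm]
    calc zstar * |∑ k : Fin q,
          (if w k.castSucc = w k.succ ∧ w k.castSucc = v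
            then acGAux γ (t k.castSucc) θ - acGAux γ (t k.succ) θ else 0)|
        ≤ zstar * (γ * q) := mul_le_mul_of_nonneg_left hsum hz.le
      _ = zstar * γ * q := by ring
end
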